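/- Let n ≥ 2 be an integer and a, b, c ∈ ℝ. Define f(x) = ((b + n·a − a)·x^(n−2))/(1 − a·x^(n−1)) and g(x) = (1 − a·x^(n−1))·(x + c·x^n). Then there exists a neighborhood of 0 on which the identity g′(x) + f(x)·g(x) = 1 holds for all x if and only if either (a = b and c = 0) or (a = b/n and c = −(n−1)·b/n²). -/

import Mathlib

/-- Classification of isochronous centers with zero Urabe function for the
homogeneous perturbation `ẋ = −y + a x^(n−1) y, ẏ = x + b x^(n−2) y² + c xⁿ`:
the associated Liénard data `f, g` satisfy `g′ + f·g = 1` near `0` iff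
`(a = b ∧ c = 0)` or `(a = b/n ∧ c = −(n−1)b/n²)`. -/
theorem stmt_0 (n : ℕ) (hn : 2 ≤ n) (a b c : ℝ) (f g : ℝ → ℝ)
    (hf : ∀ x : ℝ, f x = ((b + (n : ℝ) * a - a) * x ^ (n - 2)) / (1 - a * x ^ (n - 1)))
    (hg : ∀ x : ℝ, g x = (1 - a * x ^ (n - 1)) * (x + c * x ^ n)) :
    (∃ ε > (0 : ℝ), ∀ x : ℝ, |x| < ε → deriv g x + f x * g x = 1) ↔
      ((a = b ∧ c = 0) ∨ (a = b / (n : ℝ) ∧ c = -(((n : ℝ) - 1) * b) / (n : ℝ) ^ 2)) := by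
  obtain ⟨m, rfl⟩ : ∃ m, n = m + 2 := ⟨n - 2, by omega⟩
  have h1 : m + 2 - 1 = m + 1 := rfl
  have h2 : m + 2 - 2 = m := rfl
  rw [h1, h2] at hf
  rw [h1] at hg
  set A : ℝ := c * (m + 2) + b - a with hA
  set B : ℝ := c * (b - a * (m + 2)) with hB
  -- derivative of g
  have hder : ∀ x : ℝ,
      deriv g x = -(a * ((m+1) * x ^ m)) * (x + c * x ^ (m+2))
        + (1 - a * x ^ (m+1)) * (1 + c * ((m+2) * x ^ (m+1))) := by
    intro x
    have hgg : g = fun x : ℝ => (1 - a * x ^ (m+1)) * (x + c * x ^ (m+2)) := funext hg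
    have d1 : HasDerivAt (fun x : ℝ => 1 - a * x ^ (m+1)) (-(a * ((m+1) * x ^ m))) x := by
      have := ((hasDerivAt_pow (m+1) x).const_mul a)
      exact ((hasDerivAt_const x (1:ℝ)).sub this).congr_deriv (by push_cast; ring)
    have d2 : HasDerivAt (fun x : ℝ => x + c * x ^ (m+2)) (1 + c * ((m+2) * x ^ (m+1))) x := by
      have := ((hasDerivAt_pow (m+2) x).const_mul c)
      exact ((hasDerivAt_id x).add this).congr_deriv (by push_cast; ring)
    rw [hgg]
    exact (d1.mul d2).deriv
  -- key algebraic identity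
  have hkey : ∀ x : ℝ, 1 - a * x ^ (m+1) ≠ 0 →
      deriv g x + f x * g x = 1 + (A * x ^ (m+1) + B * (x ^ (m+1))^2) := by
    intro x hx
    have hfg : f x * g x = (b + ((m:ℝ)+2) * a - a) * x ^ m * (x + c * x ^ (m+2)) := by
      rw [hf, hg]
      field_simp
      push_cast
      ring
    rw [hder, hfg, hA, hB]
    push_cast
    ring
  have hden : ∀ x : ℝ, |x| < 1 / (1 + |a|) → 1 - a * x ^ (m+1) ≠ 0 := by
    intro x hx
    have ha0 : (0:ℝ) < 1 + |a| := by positivity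
    have hx1 : |x| < 1 := lt_of_lt_of_le hx (by
      rw [div_le_one ha0]; linarith [abs_nonneg a])
    have hxp : |x| ^ (m+1) ≤ |x| := by
      calc |x| ^ (m+1) ≤ |x| ^ 1 :=
        pow_le_pow_of_le_one (abs_nonneg x) hx1.le (by omega)
      _ = |x| := pow_one _
    have : |a * x ^ (m+1)| < 1 := by
      rw [abs_mul, abs_pow]
      calc |a| * |x| ^ (m+1) ≤ |a| * |x| := by
            exact mul_le_mul_of_nonneg_left hxp (abs_nonneg a)
        _ ≤ (1 + |a|) * |x| := by nlinarith [abs_nonneg x]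
        _ < (1 + |a|) * (1 / (1 + |a|)) := by
            exact mul_lt_mul_of_pos_left hx ha0
        _ = 1 := by field_simp
    intro h
    have h' : a * x ^ (m+1) = 1 := by linarith
    rw [h', abs_one] at this
    exact lt_irrefl _ this
  constructor
  · rintro ⟨ε, hε, H⟩
    set δ : ℝ := min ε (1 / (1 + |a|)) with hδdef
    have hδ : 0 < δ := lt_min hε (by positivity)
    have key : ∀ x : ℝ, |x| < δ → A * x ^ (m+1) + B * (x ^ (m+1))^2 = 0 := by
      intro x hx
      have hxε : |x| < ε := lt_of_lt_of_le hx (min_le_left _ _)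
      have hxd : |x| < 1 / (1 + |a|) := lt_of_lt_of_le hx (min_le_right _ _)
      have := hkey x (hden x hxd)
      have h1 := H x hxε
      linarith [this ▸ h1]
    have e1 := key (δ/2) (by rw [abs_of_pos (by linarith)]; linarith)
    have e2 := key (δ/3) (by rw [abs_of_pos (by linarith)]; linarith)
    set t1 : ℝ := (δ/2) ^ (m+1) with ht1
    set t2 : ℝ := (δ/3) ^ (m+1) with ht2
    have ht1p : 0 < t1 := by positivity
    have ht2p : 0 < t2 := by positivity
    have htne : t2 < t1 := by
      apply pow_lt_pow_left₀ (by linarith) (by positivity) (by omega)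
    have hB0 : B = 0 := by
      have q1 : A + B * t1 = 0 := by
        have hq : t1 * (A + B * t1) = 0 := by linear_combination e1
        rcases mul_eq_zero.mp hq with h | h
        · exact absurd h ht1p.ne'
        · exact h
      have q2 : A + B * t2 = 0 := by
        have hq : t2 * (A + B * t2) = 0 := by linear_combination e2
        rcases mul_eq_zero.mp hq with h | h
        · exact absurd h ht2p.ne'
        · exact h
      nlinarith
    have hA0 : A = 0 := by
      have q1 : A * t1 = 0 := by rw [hB0] at e1; linarith
      rcases mul_eq_zero.mp q1 with h | h
      · exact h
      · exact absurd h (by positivity)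
    rcases mul_eq_zero.mp (hB ▸ hB0) with hc | hba
    · left
      constructor
      · rw [hA, hc] at hA0; linarith
      · exact hc
    · right
      have hm2 : ((m:ℝ) + 2) ≠ 0 := by positivity
      have hban : b = a * ((m:ℝ) + 2) := by linarith
      constructor
      · push_cast
        rw [hban]; field_simp
      · push_cast
        rw [hA] at hA0
        field_simp
        nlinarith
  · intro h
    have hAB : A = 0 ∧ B = 0 := by
      rcases h with ⟨rfl, rfl⟩ | ⟨ha, hc⟩
      · constructor <;> simp [hA, hB]
      · have hm2 : ((m:ℝ) + 2) ≠ 0 := by positivity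
        push_cast at ha hc
        constructor
        · rw [hA, ha, hc]; field_simp; ring
        · rw [hB, ha, hc]; field_simp; ring
    refine ⟨1 / (1 + |a|), by positivity, fun x hx => ?_⟩
    rw [hkey x (hden x hx), hAB.1, hAB.2]
    ring
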